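/- Let h be an even positive integer and c ∈ ℝ with c ≠ 0. If φ : ℝ → ℂ is differentiable, satisfies φ'(t) = −c·tʰ·φ(t) for all t ∈ ℝ, and φ ∈ L²(ℝ), then φ is identically zero. Equivalently, for h even and c ≠ 0 the function t ↦ exp(−c·t^(h+1)/(h+1)) does not belong to L²(ℝ). -/

import Mathlib

open MeasureTheory

lemma aux_not_mem {f : ℝ → ℂ} {ε : ℝ} (hε : 0 < ε) {S : Set ℝ} (hS : MeasurableSet S)
    (hμ : volume S = ⊤) (hf : ∀ t ∈ S, ε ≤ ‖f t‖) : ¬ MemLp f 2 volume := by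
  intro hmem
  have hint : Integrable (fun x => ‖f x‖ ^ (2:ℝ)) volume := by
    have := hmem.integrable_norm_rpow (by norm_num) (by norm_num)
    simpa using this
  have hconst : IntegrableOn (fun _ : ℝ => ε ^ (2:ℝ)) S volume := by
    refine Integrable.mono (hint.integrableOn) aestronglyMeasurable_const ?_
    refine (ae_restrict_iff' hS).2 (Filter.Eventually.of_forall fun t ht => ?_)
    rw [Real.norm_eq_abs, Real.norm_eq_abs, abs_of_nonneg (Real.rpow_nonneg hε.le _),
      abs_of_nonneg (Real.rpow_nonneg (norm_nonneg _) _)]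
    exact Real.rpow_le_rpow hε.le (hf t ht) (by norm_num)
  rw [integrableOn_const_iff] at hconst
  rcases hconst with h | h
  · have : (0:ℝ) < ε ^ (2:ℝ) := Real.rpow_pos_of_pos hε _
    rw [enorm_eq_zero] at h; rw [h] at this; exact lt_irrefl _ this
  · rw [hμ] at h; exact lt_irrefl _ h

lemma aux_g_deriv (h : ℕ) (c : ℝ) (t : ℝ) :
    HasDerivAt (fun t : ℝ => -(c : ℂ) * (t : ℂ) ^ (h + 1) / ((h : ℂ) + 1))
      (-(c : ℂ) * (t : ℂ) ^ h) t := by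
  have hne : ((h : ℂ) + 1) ≠ 0 := by
    have : ((h + 1 : ℕ) : ℂ) ≠ 0 := Nat.cast_ne_zero.2 (Nat.succ_ne_zero h)
    simpa using this
  have h1 : HasDerivAt (fun z : ℂ => -(c : ℂ) * z ^ (h + 1) / ((h : ℂ) + 1))
      (-(c : ℂ) * ((h + 1 : ℕ) * (t : ℂ) ^ h) / ((h : ℂ) + 1)) (t : ℂ) := by
    simpa using (((hasDerivAt_id ((t : ℝ) : ℂ)).pow (h + 1)).const_mul (-(c : ℂ))).div_const
      ((h : ℂ) + 1)
  have h2 := h1.comp_ofReal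
  convert h2 using 1
  field_simp
  push_cast; ring

/-- Let `h` be an even positive integer and `c ∈ ℝ` with `c ≠ 0`. If `φ : ℝ → ℂ`
is differentiable, satisfies `φ'(t) = −c·tʰ·φ(t)` for all `t ∈ ℝ`, and `φ ∈ L²(ℝ)`, then `φ`
is identically zero. Equivalently, for `h` even and `c ≠ 0` the function
`t ↦ exp(−c·t^(h+1)/(h+1))` does not belong to `L²(ℝ)`. -/
theorem stmt_2 (h : ℕ) (heven : Even h) (hpos : 0 < h) (c : ℝ) (hc : c ≠ 0) :
    (∀ φ : ℝ → ℂ, Differentiable ℝ φ →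
        (∀ t : ℝ, deriv φ t = -(c : ℂ) * (t : ℂ) ^ h * φ t) →
        MemLp φ 2 volume → ∀ t : ℝ, φ t = 0) ∧
      ¬ MemLp (fun t : ℝ => Complex.exp (-(c : ℂ) * (t : ℂ) ^ (h + 1) / ((h : ℂ) + 1)))
          2 volume := by
  set g : ℝ → ℂ := fun t => -(c : ℂ) * (t : ℂ) ^ (h + 1) / ((h : ℂ) + 1) with hg_def
  have hg : ∀ t : ℝ, HasDerivAt g (-(c : ℂ) * (t : ℂ) ^ h) t := aux_g_deriv h c
  have hg0 : g 0 = 0 := by simp [hg_def]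
  -- norm of exp (g t)
  have hnorm : ∀ t : ℝ, ‖Complex.exp (g t)‖ = Real.exp (-c * t ^ (h + 1) / (h + 1)) := by
    intro t
    have : g t = ((-c * t ^ (h + 1) / (h + 1) : ℝ) : ℂ) := by
      show -(c : ℂ) * (t : ℂ) ^ (h + 1) / ((h : ℂ) + 1) = _
      push_cast; ring
    rw [this, Complex.norm_exp, Complex.ofReal_re]
  -- exponent nonneg on a half-line
  obtain ⟨S, hSmeas, hSvol, hSexp⟩ :
      ∃ S : Set ℝ, MeasurableSet S ∧ volume S = ⊤ ∧
        ∀ t ∈ S, (1 : ℝ) ≤ Real.exp (-c * t ^ (h + 1) / (h + 1)) := by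
    have hh1 : (0:ℝ) < (h : ℝ) + 1 := by positivity
    rcases lt_or_gt_of_ne hc with hneg | hposc
    · refine ⟨Set.Ici 0, measurableSet_Ici, Real.volume_Ici, fun t ht => ?_⟩
      rw [Real.one_le_exp_iff]
      have h1 : (0:ℝ) ≤ t ^ (h + 1) := pow_nonneg ht _
      exact div_nonneg (mul_nonneg (by linarith) h1) hh1.le
    · refine ⟨Set.Iic 0, measurableSet_Iic, Real.volume_Iic, fun t ht => ?_⟩
      rw [Real.one_le_exp_iff]
      have hodd : Odd (h + 1) := heven.add_one
      have ht' : t ^ (h + 1) ≤ 0 := hodd.pow_nonpos ht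
      have h1 : 0 ≤ -c * t ^ (h + 1) := by nlinarith
      exact div_nonneg h1 hh1.le
  -- Part 1
  have part1 : ∀ φ : ℝ → ℂ, Differentiable ℝ φ →
      (∀ t : ℝ, deriv φ t = -(c : ℂ) * (t : ℂ) ^ h * φ t) →
      MemLp φ 2 volume → ∀ t : ℝ, φ t = 0 := by
    intro φ hdiff hderiv hmem t
    -- ψ = φ * exp(-g) is constant
    have hψ : ∀ s : ℝ, HasDerivAt (fun s => φ s * Complex.exp (-(g s))) 0 s := by
      intro s
      have hφ : HasDerivAt φ (-(c : ℂ) * (s : ℂ) ^ h * φ s) s := by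
        have := (hdiff s).hasDerivAt
        rwa [hderiv s] at this
      have hexp : HasDerivAt (fun s => Complex.exp (-(g s)))
          (Complex.exp (-(g s)) * -(-(c : ℂ) * (s : ℂ) ^ h)) s := ((hg s).neg).cexp
      have : HasDerivAt (fun s => φ s * Complex.exp (-(g s))) _ s := hφ.mul hexp
      convert this using 1
      ring
    have hconst : ∀ s : ℝ, φ s * Complex.exp (-(g s)) = φ 0 := by
      intro s
      have := is_const_of_deriv_eq_zero (f := fun s => φ s * Complex.exp (-(g s)))
        (fun s => (hψ s).differentiableAt) (fun s => (hψ s).deriv) s 0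
      simpa [hg0] using this
    have hφeq : ∀ s : ℝ, φ s = φ 0 * Complex.exp (g s) := by
      intro s
      rw [← hconst s, mul_assoc, ← Complex.exp_add]
      simp
    by_contra hne
    have hφ0 : φ 0 ≠ 0 := by
      intro h0
      exact hne (by rw [hφeq t, h0, zero_mul])
    have hφ0pos : 0 < ‖φ 0‖ := norm_pos_iff.2 hφ0
    refine aux_not_mem hφ0pos hSmeas hSvol (fun s hs => ?_) hmem
    rw [hφeq s, norm_mul, hnorm s]
    nth_rewrite 1 [← mul_one ‖φ 0‖]
    exact mul_le_mul_of_nonneg_left (hSexp s hs) (norm_nonneg _)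
  refine ⟨part1, fun hmem => ?_⟩
  -- Part 2
  have hdiff : Differentiable ℝ (fun t : ℝ => Complex.exp (g t)) :=
    fun s => ((hg s).cexp).differentiableAt
  have hderiv : ∀ s : ℝ, deriv (fun t : ℝ => Complex.exp (g t)) s
      = -(c : ℂ) * (s : ℂ) ^ h * Complex.exp (g s) := by
    intro s
    rw [((hg s).cexp).deriv]
    ring
  have := part1 _ hdiff hderiv hmem 0
  rw [hg0, Complex.exp_zero] at this
  exact one_ne_zero this
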